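/- (Corollary 4.4, well-definedness identity.) For any polynomials M, V, W ∈ 𝕜[t], one has σ(M·V^p, M·W^p) − (M·σ^{1/p}(V,W) − 1)^p = 1 in 𝕜[t]. (Consequently the triple x₀(t) = M·V^p, x₁(t) = M·W^p, x₂(t) = M·σ^{1/p}(V,W) − 1 has no common zero and defines a morphism 𝔸¹ → ℙ² whose image avoids Δ_X.) -/

import Mathlib

open Polynomial Finset

/-- **Corollary 4.4, well-definedness identity.**  Let `p` be a prime and `𝕜`
a (perfect) field of characteristic `p`, with `σ_i ∈ 𝕜` and `p`-th roots `τ i` (so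
`τ i ^ p = σ_i`).  For any `M, V, W ∈ 𝕜[t]`,
`σ(M·V^p, M·W^p) − (M·σ^{1/p}(V,W) − 1)^p = 1`. -/
theorem parameterization_avoids_boundary
    (p : ℕ) (hp : p.Prime) (𝕜 : Type*) [Field 𝕜] [CharP 𝕜 p]
    (s τ : ℕ → 𝕜) (hτ : ∀ i, τ i ^ p = s i)
    (M V W : Polynomial 𝕜) :
    (∑ i ∈ Ioo 0 p, C (s i) * (M * V ^ p) ^ i * (M * W ^ p) ^ (p - i)) -
      (M * (∑ i ∈ Ioo 0 p, C (τ i) * V ^ i * W ^ (p - i)) - 1) ^ p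
      = 1 := by
  haveI : Fact p.Prime := ⟨hp⟩
  haveI : ExpChar (Polynomial 𝕜) p := ExpChar.prime hp
  have key : (M * (∑ i ∈ Ioo 0 p, C (τ i) * V ^ i * W ^ (p - i))) ^ p
      = ∑ i ∈ Ioo 0 p, C (s i) * (M * V ^ p) ^ i * (M * W ^ p) ^ (p - i) := by
    rw [mul_pow, sum_pow_char, mul_sum]
    refine sum_congr rfl fun i hi => ?_
    have hle : i ≤ p := le_of_lt (mem_Ioo.mp hi).2
    have hM : M ^ p = M ^ i * M ^ (p - i) := by
      rw [← pow_add, Nat.add_sub_cancel' hle]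
    rw [mul_pow, mul_pow, ← C_pow, hτ, hM]
    ring
  rw [sub_pow_char, one_pow, key, sub_sub_cancel]
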